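/- For all integers t ≥ 2 and n ≥ 3, ι(S_{K_n}^t) = (n−1)·n^{t−2}, where S_{K_n}^t is the t-th Sierpiński graph over the complete graph K_n. -/

import Mathlib

/-- The closed neighborhood `N[A]` of a set of vertices. -/
def closedNbhd {V : Type*} (G : SimpleGraph V) (A : Set V) : Set V :=
  {v | v ∈ A ∨ ∃ a ∈ A, G.Adj a v}

/-- A set of vertices is independent if it contains no edge. -/
def IndepSet {V : Type*} (G : SimpleGraph V) (S : Set V) : Prop :=
  ∀ u ∈ S, ∀ v ∈ S, ¬ G.Adj u v

/-- `A` is isolating if the vertices outside `N[A]` form an independent set. -/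
def IsIsolating {V : Type*} (G : SimpleGraph V) (A : Set V) : Prop :=
  IndepSet G (closedNbhd G A)ᶜ

/-- The isolation number `ι(G)`. -/
noncomputable def isolationNum {V : Type*} (G : SimpleGraph V) : ℕ :=
  sInf {n | ∃ A : Set V, IsIsolating G A ∧ A.ncard = n}

/-- `D` is a dominating set if `N[D] = V(G)`. -/
def IsDominating {V : Type*} (G : SimpleGraph V) (D : Set V) : Prop :=
  closedNbhd G D = Set.univ

/-- The domination number `γ(G)`. -/
noncomputable def dominationNum {V : Type*} (G : SimpleGraph V) : ℕ :=
  sInf {n | ∃ D : Set V, IsDominating G D ∧ D.ncard = n}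
/-- The generalized Sierpiński graph `S_G^t` on words of length `t` over `V(G)`. -/
def sierpinskiGraph {V : Type*} (G : SimpleGraph V) (t : ℕ) : SimpleGraph (Fin t → V) where
  Adj u v := ∃ i : Fin t, (∀ j, j < i → u j = v j) ∧ u i ≠ v i ∧ G.Adj (u i) (v i) ∧
      ∀ j, i < j → u j = v i ∧ v j = u i
  symm := by
    constructor
    rintro u v ⟨i, h1, h2, h3, h4⟩
    exact ⟨i, fun j hj => (h1 j hj).symm, h2.symm, h3.symm,
      fun j hj => ⟨(h4 j hj).2, (h4 j hj).1⟩⟩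
  loopless := by
    constructor
    rintro u ⟨i, -, h2, -, -⟩
    exact h2 rfl

/-- The extreme vertices of `S_G^t`: the constant words. -/
def extremeVertices (V : Type*) (t : ℕ) : Set (Fin t → V) :=
  {w | ∃ x : V, w = fun _ => x}


namespace SierpAux

abbrev P (k m : ℕ) := Fin (k+2) → Fin (m+3)

abbrev SG (k m : ℕ) : SimpleGraph (P k m) := sierpinskiGraph (⊤ : SimpleGraph (Fin (m+3))) (k+2)

variable {k m : ℕ}

def sl (k : ℕ) : Fin (k+2) := ⟨k, by omega⟩
def la (k : ℕ) : Fin (k+2) := ⟨k+1, by omega⟩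

lemma sl_ne_la : sl k ≠ la k := by simp [sl, la, Fin.ext_iff]

lemma lt_la_of_ne {j : Fin (k+2)} (h : j ≠ la k) : j < la k := by
  have h1 := j.isLt
  have h2 : j.val ≠ k+1 := fun hh => h (Fin.ext hh)
  rw [Fin.lt_def]
  show j.val < k+1
  omega

lemma tri (j : Fin (k+2)) : j < sl k ∨ j = sl k ∨ j = la k := by
  have := j.isLt
  rw [Fin.lt_def]
  simp only [Fin.ext_iff, sl, la]
  omega

lemma eq_la_of_gt_sl {j : Fin (k+2)} (h : sl k < j) : j = la k := by
  have := j.isLt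
  rw [Fin.lt_def] at h
  simp only [Fin.ext_iff, sl, la] at h ⊢
  omega

lemma sl_lt_la : sl k < la k := by rw [Fin.lt_def]; simp [sl, la]

lemma lt_la_lt_sl {j : Fin (k+2)} (h1 : j ≠ sl k) (h2 : j ≠ la k) : j < sl k := by
  rcases tri j with h | h | h <;> tauto

def vert (p : P k m) (c y : Fin (m+3)) : P k m :=
  fun i => if i = sl k then c else if i = la k then y else p i

@[simp] lemma vert_sl (p : P k m) (c y : Fin (m+3)) : vert p c y (sl k) = c := by
  simp [vert]

@[simp] lemma vert_la (p : P k m) (c y : Fin (m+3)) : vert p c y (la k) = y := by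
  simp [vert, sl_ne_la.symm, (Ne.symm sl_ne_la : la k ≠ sl k)]

lemma vert_other (p : P k m) (c y : Fin (m+3)) {i : Fin (k+2)}
    (h1 : i ≠ sl k) (h2 : i ≠ la k) : vert p c y i = p i := by
  simp [vert, h1, h2]

lemma vert_self (p : P k m) : vert p (p (sl k)) (p (la k)) = p := by
  funext i
  unfold vert
  split
  · next h => rw [h]
  · split
    · next h => rw [h]
    · rfl

def Blk (p : P k m) : Set (P k m) := {w | ∀ i, i ≠ sl k → i ≠ la k → w i = p i}

lemma vert_mem_blk (p : P k m) (c y : Fin (m+3)) : vert p c y ∈ Blk p := by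
  intro i h1 h2; exact vert_other p c y h1 h2

lemma sg_adj {u v : P k m} : (SG k m).Adj u v ↔
    ∃ i, (∀ j, j < i → u j = v j) ∧ u i ≠ v i ∧ (∀ j, i < j → u j = v i ∧ v j = u i) := by
  constructor
  · rintro ⟨i, h1, h2, _, h4⟩; exact ⟨i, h1, h2, h4⟩
  · rintro ⟨i, h1, h2, h4⟩
    exact ⟨i, h1, h2, by simpa using h2, h4⟩

lemma adj_same_clique (p : P k m) (c : Fin (m+3)) {y y' : Fin (m+3)} (h : y ≠ y') :
    (SG k m).Adj (vert p c y) (vert p c y') := by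
  rw [sg_adj]
  refine ⟨la k, ?_, by simpa using h, ?_⟩
  · intro j hj
    rcases tri j with h' | h' | h'
    · rw [vert_other _ _ _ (ne_of_lt h') (ne_of_lt (h'.trans sl_lt_la)),
        vert_other _ _ _ (ne_of_lt h') (ne_of_lt (h'.trans sl_lt_la))]
    · subst h'; simp
    · exact absurd h' (ne_of_lt hj)
  · intro j hj
    have := j.isLt
    rw [Fin.lt_def] at hj
    simp only [la] at hj
    omega

lemma adj_cross (p : P k m) {c y : Fin (m+3)} (h : c ≠ y) :
    (SG k m).Adj (vert p c y) (vert p y c) := by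
  rw [sg_adj]
  refine ⟨sl k, ?_, by simpa using h, ?_⟩
  · intro j hj
    have h2 : j ≠ la k := ne_of_lt (hj.trans sl_lt_la)
    rw [vert_other _ _ _ (ne_of_lt hj) h2, vert_other _ _ _ (ne_of_lt hj) h2]
  · intro j hj
    have hja := eq_la_of_gt_sl hj
    subst hja
    simp

lemma adj_analysis (p : P k m) (c y : Fin (m+3)) (hyc : y ≠ c) (a : P k m)
    (hadj : (SG k m).Adj a (vert p c y)) :
    (a ∈ Blk p ∧ a (sl k) = c) ∨ a = vert p y c := by
  rw [sg_adj] at hadj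
  obtain ⟨i, h1, h2, h4⟩ := hadj
  rcases tri i with hi | hi | hi
  · exfalso
    have hs := h4 (sl k) hi
    have hl := h4 (la k) (hi.trans sl_lt_la)
    rw [vert_sl] at hs
    rw [vert_la] at hl
    exact hyc (hl.2.trans hs.2.symm)
  · subst hi
    right
    have hl := h4 (la k) sl_lt_la
    rw [vert_la, vert_sl] at hl
    funext j
    rcases tri j with hj | hj | hj
    · rw [vert_other _ _ _ (ne_of_lt hj) (ne_of_lt (hj.trans sl_lt_la))]
      rw [h1 j hj, vert_other _ _ _ (ne_of_lt hj) (ne_of_lt (hj.trans sl_lt_la))]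
    · subst hj; rw [vert_sl, hl.2]
    · subst hj; rw [vert_la, hl.1]
  · subst hi
    left
    constructor
    · intro j hj1 hj2
      rw [h1 j (lt_la_of_ne hj2), vert_other _ _ _ hj1 hj2]
    · rw [h1 (sl k) sl_lt_la, vert_sl]


lemma clique_cov {A : Set (P k m)} (hA : IsIsolating (SG k m) A) (p : P k m) (c : Fin (m+3)) :
    ∃ y₀, ∀ y, y ≠ y₀ → vert p c y ∈ closedNbhd (SG k m) A := by
  by_contra hcon
  push_neg at hcon
  obtain ⟨y₁, hy₁, h₁⟩ := hcon 0
  obtain ⟨y₂, hy₂, h₂⟩ := hcon y₁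
  exact hA _ h₂ _ h₁ (adj_same_clique p c hy₂)

open Finset in
lemma block_bound {A : Set (P k m)} (hA : IsIsolating (SG k m) A)
    (p : P k m) (K : Finset (P k m)) (hKmem : ∀ w, w ∈ K ↔ w ∈ A ∧ w ∈ Blk p) :
    m + 2 ≤ K.card := by
  classical
  set E := Finset.univ.filter (fun c : Fin (m+3) => ∀ w ∈ K, w (sl k) ≠ c) with hE
  -- Bound 1 : (m+3) - E.card ≤ K.card
  have hb1 : (m + 3) - E.card ≤ K.card := by
    have hch : ∀ c : Fin (m+3), ∃ w, c ∈ Eᶜ → w ∈ K ∧ w (sl k) = c := by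
      intro c
      by_cases hc : c ∈ Eᶜ
      · rw [Finset.mem_compl, hE, Finset.mem_filter] at hc
        push_neg at hc
        obtain ⟨w, hw, hws⟩ := hc (Finset.mem_univ c)
        exact ⟨w, fun _ => ⟨hw, hws⟩⟩
      · exact ⟨fun _ => 0, fun h => absurd h hc⟩
    choose f hf using hch
    have hinj : Set.InjOn f ↑(Eᶜ) := by
      intro c hc c' hc' hfc
      rw [← (hf c hc).2, ← (hf c' hc').2, hfc]
    have := Finset.card_le_card_of_injOn f (fun c hc => (hf c hc).1) hinj
    calc (m+3) - E.card = Eᶜ.card := by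
          rw [Finset.card_compl]; simp
      _ ≤ K.card := this
  -- Bound 2 : E.card * (m+1) ≤ K.card
  have hb2 : E.card * (m+1) ≤ K.card := by
    set S : Fin (m+3) → Finset (P k m) := fun c =>
      (Finset.univ.filter (fun y => y ≠ c ∧ vert p c y ∈ closedNbhd (SG k m) A)).image
        (fun y => vert p y c) with hS
    have hsub : ∀ c ∈ E, S c ⊆ K := by
      intro c hc x hx
      rw [hE, Finset.mem_filter] at hc
      rw [hS, Finset.mem_image] at hx
      obtain ⟨y, hy, rfl⟩ := hx
      rw [Finset.mem_filter] at hy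
      obtain ⟨-, hyc, hcov⟩ := hy
      have hmem : vert p y c ∈ A := by
        rcases hcov with hin | ⟨a, haA, hadj⟩
        · exfalso
          refine hc.2 (vert p c y) ?_ (by simp)
          rw [hKmem]
          exact ⟨hin, vert_mem_blk p c y⟩
        · rcases adj_analysis p c y hyc a hadj with ⟨hblk, hsl⟩ | rfl
          · exfalso
            refine hc.2 a ?_ hsl
            rw [hKmem]
            exact ⟨haA, hblk⟩
          · exact haA
      rw [hKmem]
      exact ⟨hmem, vert_mem_blk p y c⟩
    have hcardS : ∀ c, m + 1 ≤ (S c).card := by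
      intro c
      obtain ⟨y₀, hy₀⟩ := clique_cov hA p c
      have hinj : Set.InjOn (fun y => vert p y c)
          ↑(Finset.univ.filter (fun y => y ≠ c ∧ vert p c y ∈ closedNbhd (SG k m) A)) := by
        intro a _ b _ hab
        have := congrFun hab (sl k)
        simpa using this
      rw [hS]
      rw [Finset.card_image_of_injOn hinj]
      have hss : (Finset.univ.erase c).erase y₀ ⊆
          Finset.univ.filter (fun y => y ≠ c ∧ vert p c y ∈ closedNbhd (SG k m) A) := by
        intro y hy
        rw [Finset.mem_erase, Finset.mem_erase] at hy
        rw [Finset.mem_filter]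
        exact ⟨Finset.mem_univ _, hy.2.1, hy₀ y hy.1⟩
      refine le_trans ?_ (Finset.card_le_card hss)
      rcases eq_or_ne y₀ c with rfl | hne
      · rw [Finset.erase_idem]
        have : (Finset.univ.erase y₀).card = m + 2 := by
          rw [Finset.card_erase_of_mem (Finset.mem_univ _)]; simp
        omega
      · have h1 : (Finset.univ.erase c).card = m + 2 := by
          rw [Finset.card_erase_of_mem (Finset.mem_univ _)]; simp
        have h2 : y₀ ∈ Finset.univ.erase c := by
          rw [Finset.mem_erase]; exact ⟨hne, Finset.mem_univ _⟩
        rw [Finset.card_erase_of_mem h2, h1]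
        omega
    have hdisj : ∀ c ∈ E, ∀ c' ∈ E, c ≠ c' → Disjoint (S c) (S c') := by
      intro c _ c' _ hcc'
      rw [Finset.disjoint_left]
      intro x hx hx'
      rw [hS, Finset.mem_image] at hx hx'
      obtain ⟨y, -, rfl⟩ := hx
      obtain ⟨y', -, he⟩ := hx'
      have := congrFun he (la k)
      simp only [vert_la] at this
      exact hcc' this.symm
    calc E.card * (m+1) = ∑ _c ∈ E, (m+1) := by rw [Finset.sum_const, smul_eq_mul]
      _ ≤ ∑ c ∈ E, (S c).card := Finset.sum_le_sum (fun c _ => hcardS c)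
      _ = (E.biUnion S).card := (Finset.card_biUnion hdisj).symm
      _ ≤ K.card := Finset.card_le_card (Finset.biUnion_subset.2 hsub)
  rcases le_or_gt E.card 1 with h | h
  · omega
  · have : 2 * (m+1) ≤ E.card * (m+1) := Nat.mul_le_mul_right _ h
    omega


def coordEquiv (k m : ℕ) (x : Fin (m+3)) (s : Finset (Fin (m+3))) :
    {w : P k m // w (la k) = x ∧ w (sl k) ∈ s} ≃
      {y // y ∈ s} × ({i : Fin (k+2) // i ≠ sl k ∧ i ≠ la k} → Fin (m+3)) where
  toFun w := (⟨w.1 (sl k), w.2.2⟩, fun i => w.1 i.1)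
  invFun z := ⟨fun i => if h : i = sl k then z.1.1 else if h2 : i = la k then x
      else z.2 ⟨i, h, h2⟩, by
    constructor
    · simp only [dif_neg (Ne.symm (sl_ne_la (k := k))), dif_pos rfl]; simp
    · simp only [dif_pos rfl]; simpa using z.1.2⟩
  left_inv w := Subtype.ext (funext fun i => by
    rcases tri i with h | h | h
    · simp only [dif_neg (ne_of_lt h), dif_neg (ne_of_lt (h.trans sl_lt_la))]
    · subst h; simp only [dif_pos rfl]; simp
    · subst h
      simp only [dif_neg (Ne.symm (sl_ne_la (k := k))), dif_pos rfl]
      simpa using w.2.1.symm)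
  right_inv z := by
    refine Prod.ext (Subtype.ext ?_) (funext fun i => ?_)
    · simp only [dif_pos rfl]; simp
    · simp only [dif_neg i.2.1, dif_neg i.2.2]

lemma card_idx : Fintype.card {i : Fin (k+2) // i ≠ sl k ∧ i ≠ la k} = k := by
  rw [Fintype.card_subtype]
  have he : Finset.univ.filter (fun i : Fin (k+2) => i ≠ sl k ∧ i ≠ la k)
      = Finset.univ \ {sl k, la k} := by
    ext i
    simp [not_or]
  rw [he, Finset.card_sdiff_of_subset (Finset.subset_univ _)]
  have h2 : ({sl k, la k} : Finset (Fin (k+2))).card = 2 := by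
    rw [Finset.card_insert_of_notMem (by simp [sl_ne_la]), Finset.card_singleton]
  rw [h2]
  simp

lemma card_filter_two (x : Fin (m+3)) (s : Finset (Fin (m+3))) :
    (Finset.univ.filter (fun w : P k m => w (la k) = x ∧ w (sl k) ∈ s)).card
      = s.card * (m+3)^k := by
  classical
  rw [← Fintype.card_subtype]
  rw [Fintype.card_congr (coordEquiv k m x s)]
  rw [Fintype.card_prod, Fintype.card_coe, Fintype.card_fun, card_idx]
  simp

def A0 (k m : ℕ) : Set (P k m) :=
  ↑(Finset.univ.filter (fun w : P k m =>
      w (la k) = 0 ∧ w (sl k) ∈ Finset.univ.erase (0 : Fin (m+3))))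

lemma mem_A0 {w : P k m} : w ∈ A0 k m ↔ w (la k) = 0 ∧ w (sl k) ≠ 0 := by
  simp [A0]

lemma cov_of (v : P k m) (h : ¬(v (sl k) = 0 ∧ v (la k) = 0)) :
    v ∈ closedNbhd (SG k m) (A0 k m) := by
  show v ∈ A0 k m ∨ ∃ a ∈ A0 k m, (SG k m).Adj a v
  by_cases h1 : v (la k) = 0
  · by_cases h2 : v (sl k) = 0
    · exact absurd ⟨h2, h1⟩ h
    · exact Or.inl (mem_A0.2 ⟨h1, h2⟩)
  · by_cases h2 : v (sl k) = 0
    · refine Or.inr ⟨vert v (v (la k)) 0, mem_A0.2 ⟨by simp, by simpa using h1⟩, ?_⟩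
      have hadj := adj_cross (p := v) (c := v (la k)) (y := (0 : Fin (m+3))) h1
      have hv : vert v (0 : Fin (m+3)) (v (la k)) = v := by
        rw [← h2]; exact vert_self v
      rwa [hv] at hadj
    · refine Or.inr ⟨vert v (v (sl k)) 0, mem_A0.2 ⟨by simp, by simpa using h2⟩, ?_⟩
      have hadj := adj_same_clique (p := v) (c := v (sl k))
        (y := (0 : Fin (m+3))) (y' := v (la k)) (Ne.symm h1)
      rwa [vert_self v] at hadj

lemma indep_D {u v : P k m} (hu1 : u (sl k) = 0) (hu2 : u (la k) = 0)
    (hv1 : v (sl k) = 0) (hv2 : v (la k) = 0) : ¬ (SG k m).Adj u v := by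
  rw [sg_adj]
  rintro ⟨i, h1, h2, h4⟩
  by_cases hi : i = la k
  · subst hi; exact h2 (hu2.trans hv2.symm)
  · have hh := h4 (la k) (lt_la_of_ne hi)
    apply h2
    rw [← hh.2, ← hh.1, hu2, hv2]

lemma A0_isolating : IsIsolating (SG k m) (A0 k m) := by
  intro u hu v hv hadj
  rw [Set.mem_compl_iff] at hu hv
  have hu2 : u (sl k) = 0 ∧ u (la k) = 0 := by
    by_contra hc; exact hu (cov_of u hc)
  have hv2 : v (sl k) = 0 ∧ v (la k) = 0 := by
    by_contra hc; exact hv (cov_of v hc)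
  exact indep_D hu2.1 hu2.2 hv2.1 hv2.2 hadj

lemma A0_ncard : (A0 k m).ncard = (m+2) * (m+3)^k := by
  rw [A0, Set.ncard_coe_finset, card_filter_two]
  congr 1
  rw [Finset.card_erase_of_mem (Finset.mem_univ _)]
  simp

lemma lower_bound {A : Set (P k m)} (hA : IsIsolating (SG k m) A) :
    (m+2) * (m+3)^k ≤ A.ncard := by
  classical
  have hfin : A.Finite := Set.toFinite A
  rw [Set.ncard_eq_toFinset_card _ hfin]
  set F := hfin.toFinset with hF
  set κ : P k m → P k m := fun w i => if i = sl k ∨ i = la k then 0 else w i with hκ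
  set T := Finset.univ.filter
      (fun r : P k m => r (la k) = 0 ∧ r (sl k) ∈ ({0} : Finset (Fin (m+3)))) with hT
  have hmap : ∀ w ∈ F, κ w ∈ T := by
    intro w _
    rw [hT, Finset.mem_filter]
    exact ⟨Finset.mem_univ _, by simp [hκ], by simp [hκ]⟩
  rw [Finset.card_eq_sum_card_fiberwise hmap]
  have hfib : ∀ r ∈ T, m + 2 ≤ (F.filter (fun w => κ w = r)).card := by
    intro r hr
    rw [hT, Finset.mem_filter, Finset.mem_singleton] at hr
    apply block_bound hA r
    intro w
    rw [Finset.mem_filter, hF, Set.Finite.mem_toFinset]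
    constructor
    · rintro ⟨hwA, hwk⟩
      refine ⟨hwA, ?_⟩
      intro i hi1 hi2
      have hcc := congrFun hwk i
      simpa [hκ, hi1, hi2] using hcc
    · rintro ⟨hwA, hblk⟩
      refine ⟨hwA, ?_⟩
      funext i
      by_cases hi : i = sl k ∨ i = la k
      · simp only [hκ, if_pos hi]
        rcases hi with rfl | rfl
        · exact hr.2.2.symm
        · exact hr.2.1.symm
      · push_neg at hi
        simp only [hκ, if_neg (by tauto : ¬(i = sl k ∨ i = la k))]
        exact hblk i hi.1 hi.2
  have hTcard : T.card = (m+3)^k := by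
    rw [hT, card_filter_two]; simp
  calc (m+2) * (m+3)^k = ∑ _r ∈ T, (m+2) := by
        rw [Finset.sum_const, smul_eq_mul, hTcard]; ring
    _ ≤ ∑ r ∈ T, (F.filter (fun w => κ w = r)).card := Finset.sum_le_sum hfib

end SierpAux

theorem isolation_sierpinski_completeGraph (t n : ℕ) (ht : 2 ≤ t) (hn : 3 ≤ n) :
    isolationNum (sierpinskiGraph (⊤ : SimpleGraph (Fin n)) t) = (n - 1) * n ^ (t - 2) := by
  obtain ⟨k, rfl⟩ : ∃ k, t = k + 2 := ⟨t - 2, by omega⟩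
  obtain ⟨m, rfl⟩ : ∃ m, n = m + 3 := ⟨n - 3, by omega⟩
  have hrhs : (m + 3 - 1) * (m + 3) ^ (k + 2 - 2) = (m + 2) * (m + 3) ^ k := by norm_num
  rw [hrhs]
  apply le_antisymm
  · exact Nat.sInf_le ⟨SierpAux.A0 k m, SierpAux.A0_isolating, SierpAux.A0_ncard⟩
  · refine le_csInf ⟨_, SierpAux.A0 k m, SierpAux.A0_isolating, rfl⟩ ?_
    rintro b ⟨A, hA, rfl⟩
    exact SierpAux.lower_bound hA
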